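/- arXiv:1004.0154 — 8 statements merged into one kernel-verified Lean document; each statement's English description precedes it below -/
import Mathlib

section
/- Let M be a matroid (in the Bruhn–Diestel–Kriesell–Wollan sense, allowing infinite ground sets) with ground set E, and let B ⊆ A ⊆ E. Then there exist independent sets I, J of M with J ⊆ I, I maximal among independent subsets of A, and J maximal among independent subsets of B; moreover, for any such pair I, J, the relative rank r_M(A|B) equals the cardinality |I \ J|. -/
open Set Matroid

variable {α : Type*}

/-- `J` is a maximal independent subset of `B` in the matroid `M`. -/
def Matroid.IsMaxIndepIn (M : Matroid α) (J B : Set α) : Prop :=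
  M.Indep J ∧ J ⊆ B ∧ ∀ ⦃J' : Set α⦄, M.Indep J' → J ⊆ J' → J' ⊆ B → J' = J

/-- The relative rank `r_M(A|B)`: the maximum of `|I \ J|` over pairs `J ⊆ I ⊆ A` with
`I` independent and `J` a maximal independent subset of `B`. -/
noncomputable def Matroid.relRank (M : Matroid α) (A B : Set α) : ℕ∞ :=
  sSup {n : ℕ∞ | ∃ I J : Set α,
    M.Indep I ∧ J ⊆ I ∧ I ⊆ A ∧ M.IsMaxIndepIn J B ∧ n = (I \ J).encard}

lemma isMaxIndepIn_iff_basis {M : Matroid α} {J X : Set α} (hX : X ⊆ M.E) :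
    M.IsMaxIndepIn J X ↔ M.IsBasis J X := by
  rw [Matroid.isBasis_iff hX]
  constructor
  · rintro ⟨h1, h2, h3⟩
    exact ⟨h1, h2, fun J' hJ' hJJ' hJ'X => (h3 hJ' hJJ' hJ'X).symm⟩
  · rintro ⟨h1, h2, h3⟩
    exact ⟨h1, h2, fun J' hJ' hJJ' hJ'X => (h3 J' hJ' hJJ' hJ'X).symm⟩

/-- Two bases of `A` containing a common set `J` have equinumerous differences with `J`. -/
lemma aux_fixedJ {M : Matroid α} {I I' J A : Set α} (hI : M.IsBasis I A) (hI' : M.IsBasis I' A)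
    (hJ : J ⊆ I) (hJ' : J ⊆ I') : (I \ J).encard = (I' \ J).encard := by
  have hcomm : (I \ I').encard = (I' \ I).encard :=
    hI.restrict_isBase.encard_diff_comm hI'.restrict_isBase
  have h1 : (I \ J) \ (I' \ J) = I \ I' := by
    ext x; simp only [mem_diff]; constructor
    · rintro ⟨⟨hxI, hxJ⟩, h⟩
      exact ⟨hxI, fun hxI' => h ⟨hxI', hxJ⟩⟩
    · rintro ⟨hxI, hxI'⟩
      exact ⟨⟨hxI, fun hxJ => hxI' (hJ' hxJ)⟩, fun h => hxI' h.1⟩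
  have h2 : (I' \ J) \ (I \ J) = I' \ I := by
    ext x; simp only [mem_diff]; constructor
    · rintro ⟨⟨hxI', hxJ⟩, h⟩
      exact ⟨hxI', fun hxI => h ⟨hxI, hxJ⟩⟩
    · rintro ⟨hxI', hxI⟩
      exact ⟨⟨hxI', fun hxJ => hxI (hJ hxJ)⟩, fun h => hxI h.1⟩
  have h3 : (I \ J) ∩ (I' \ J) = (I' \ J) ∩ (I \ J) := inter_comm _ _
  calc (I \ J).encard = ((I \ J) \ (I' \ J)).encard + ((I \ J) ∩ (I' \ J)).encard :=
        (encard_diff_add_encard_inter _ _).symm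
    _ = ((I' \ J) \ (I \ J)).encard + ((I' \ J) ∩ (I \ J)).encard := by
        rw [h1, h2, hcomm, h3]
    _ = (I' \ J).encard := encard_diff_add_encard_inter _ _

/-- Well-definedness of the relative rank. -/
lemma aux_main {M : Matroid α} {A B I₁ J₁ I₂ J₂ : Set α} (hBA : B ⊆ A) (hAE : A ⊆ M.E)
    (hI₁ : M.IsBasis I₁ A) (hJ₁ : M.IsBasis J₁ B) (hJI₁ : J₁ ⊆ I₁)
    (hI₂ : M.IsBasis I₂ A) (hJ₂ : M.IsBasis J₂ B) (hJI₂ : J₂ ⊆ I₂) :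
    (I₁ \ J₁).encard = (I₂ \ J₂).encard := by
  obtain ⟨I₃, hI₃, hJ₂I₃, hI₃sub⟩ :=
    hJ₂.indep.exists_isBasis_subset_union_isBasis (hJ₂.subset.trans hBA) hI₁
  -- I₃ ∩ B = J₂
  have hI₃B : I₃ ∩ B = J₂ :=
    (hJ₂.eq_of_subset_indep (hI₃.indep.subset inter_subset_left)
      (subset_inter hJ₂I₃ hJ₂.subset) inter_subset_right).symm
  have hI₁B : I₁ ∩ B = J₁ :=
    (hJ₁.eq_of_subset_indep (hI₁.indep.subset inter_subset_left)
      (subset_inter hJI₁ hJ₁.subset) inter_subset_right).symm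
  -- I₃ \ B ⊆ I₁
  have hsub1 : I₃ \ B ⊆ I₁ \ B := fun x hx => by
    rcases hI₃sub hx.1 with h | h
    · exact absurd (hJ₂.subset h) hx.2
    · exact ⟨h, hx.2⟩
  -- I₁ \ B ⊆ I₃
  have hsub2 : I₁ \ B ⊆ I₃ := by
    intro x hx
    by_contra hxI₃
    have hxA : x ∈ A := hI₁.subset hx.1
    have hxcl : x ∈ M.closure I₃ := hI₃.subset_closure hxA
    have hI₃cl : I₃ ⊆ M.closure (I₁ \ {x}) := by
      intro y hy
      rcases hI₃sub hy with h | h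
      · have : y ∈ M.closure B := M.subset_closure B (hBA.trans hAE) (hJ₂.subset h)
        rw [← hJ₁.closure_eq_closure] at this
        exact M.closure_subset_closure (subset_diff_singleton hJI₁
          (fun hxJ₁ => hx.2 (hJ₁.subset hxJ₁))) this
      · have hyx : y ≠ x := fun h' => hxI₃ (h' ▸ hy)
        exact M.subset_closure (I₁ \ {x})
          (diff_subset.trans hI₁.indep.subset_ground) ⟨h, hyx⟩
    have : x ∈ M.closure (I₁ \ {x}) :=
      M.closure_subset_closure_of_subset_closure hI₃cl hxcl
    exact hI₁.indep.notMem_closure_diff_of_mem hx.1 this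
  have heq : I₃ \ J₂ = I₁ \ J₁ := by
    rw [← hI₃B, diff_self_inter, ← hI₁B, diff_self_inter]
    exact subset_antisymm hsub1 (fun x hx => ⟨hsub2 hx, hx.2⟩)
  rw [← heq, aux_fixedJ hI₃ hI₂ hJ₂I₃ hJI₂]

theorem stmt_0 (M : Matroid α) (A B : Set α) (hBA : B ⊆ A) (hAE : A ⊆ M.E) :
    (∃ I J : Set α, J ⊆ I ∧ M.IsMaxIndepIn I A ∧ M.IsMaxIndepIn J B) ∧
      ∀ I J : Set α, J ⊆ I → M.IsMaxIndepIn I A → M.IsMaxIndepIn J B →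
        M.relRank A B = (I \ J).encard := by
  have hBE : B ⊆ M.E := hBA.trans hAE
  constructor
  · obtain ⟨J, hJ⟩ := M.exists_isBasis B hBE
    obtain ⟨I, hI, hJI⟩ := hJ.indep.subset_isBasis_of_subset (hJ.subset.trans hBA) hAE
    exact ⟨I, J, hJI, (isMaxIndepIn_iff_basis hAE).2 hI, (isMaxIndepIn_iff_basis hBE).2 hJ⟩
  · intro I J hJI hImax hJmax
    rw [isMaxIndepIn_iff_basis hAE] at hImax
    rw [isMaxIndepIn_iff_basis hBE] at hJmax
    refine le_antisymm (sSup_le ?_) (le_sSup ?_)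
    · rintro n ⟨I', J', hI', hJ'I', hI'A, hJ'max, rfl⟩
      rw [isMaxIndepIn_iff_basis hBE] at hJ'max
      obtain ⟨I'', hI'', hI'I''⟩ := hI'.subset_isBasis_of_subset hI'A hAE
      calc (I' \ J').encard ≤ (I'' \ J').encard :=
            encard_le_encard (diff_subset_diff_left hI'I'')
        _ = (I \ J).encard :=
            aux_main hBA hAE hI'' hJ'max (hJ'I'.trans hI'I'') hImax hJmax hJI
    · exact ⟨I, J, hImax.indep, hJI, hImax.subset,
        (isMaxIndepIn_iff_basis hBE).2 hJmax, rfl⟩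
end

section
/- Let M and M' be matroids with the same ground set E. Then M' is the dual matroid M* of M if and only if for all B ⊆ A ⊆ E one has r_M(A|B) + r_{M'}(E \ B | E \ A) = |A \ B|. -/
open Set Matroid

variable {α : Type*}

lemma Matroid.IsBasis.isMaxIndepIn {M : Matroid α} {J B : Set α} (h : M.IsBasis J B) :
    M.IsMaxIndepIn J B :=
  ⟨h.indep, h.subset, fun J' hJ' hsub hsub' => (h.eq_of_subset_indep hJ' hsub hsub').symm⟩

lemma Matroid.IsMaxIndepIn.basis {M : Matroid α} {J B : Set α} (h : M.IsMaxIndepIn J B)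
    (hB : B ⊆ M.E) : M.IsBasis J B :=
  (M.isBasis_iff hB).2 ⟨h.1, h.2.1, fun J' hJ' hsub hsub' => (h.2.2 hJ' hsub hsub').symm⟩

/-- Basis exchange for "contraction": if `J, J'` are bases of `B` and `X ∪ J` is independent
with `X` disjoint from `B`, then `X ∪ J'` is independent. -/
lemma union_indep_exchange {M : Matroid α} {X B J J' : Set α}
    (hXB : Disjoint X B) (hJ : M.IsBasis J B) (hJ' : M.IsBasis J' B)
    (hXJ : M.Indep (X ∪ J)) : M.Indep (X ∪ J') := by
  set N := M ↾ (X ∪ B) with hN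
  have hBE : B ⊆ M.E := hJ.subset_ground
  have hXE : X ⊆ M.E := (hXJ.subset subset_union_left).subset_ground
  have hXBE : X ∪ B ⊆ M.E := union_subset hXE hBE
  have hNE : N.E = X ∪ B := rfl
  have hNJ : N.IsBasis J B := hJ.isBasis_restrict_of_subset subset_union_right
  have hNJ' : N.IsBasis J' B := hJ'.isBasis_restrict_of_subset subset_union_right
  -- `X ∪ J` is a base of `N`
  have hbase : N.IsBase (X ∪ J) := by
    obtain ⟨K, hK, hsub⟩ := hXJ.subset_isBasis_of_subset
      (union_subset_union_right X hJ.subset) hXBE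
    have hKB : K ∩ B = J := by
      refine (hJ.eq_of_subset_indep (hK.indep.inter_right B)
        (subset_inter ((subset_union_right).trans hsub) hJ.subset) inter_subset_right).symm
    have hKeq : K = X ∪ J := by
      refine subset_antisymm (fun x hx => ?_) hsub
      rcases hK.subset hx with hxX | hxB
      · exact Or.inl hxX
      · exact Or.inr (hKB ▸ ⟨hx, hxB⟩)
    rw [← hKeq]
    exact hK.isBase_restrict
  -- the empty set is a dual basis of `X` in `N`
  have hXBN : B ⊆ N.E := subset_union_right
  have hNEB : N.E \ B = X := by rw [hNE, union_diff_right, hXB.sdiff_eq_left]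
  have h0 : N✶.IsBasis ∅ X := by
    have h1 : N.IsBasis ((X ∪ J) ∩ B) B := by
      rwa [union_inter_distrib_right, hXB.inter_eq, empty_union,
        inter_eq_self_of_subset_left hJ.subset]
    have h2 := (hbase.inter_isBasis_iff_compl_inter_isBasis_dual hXBN).1 h1
    rw [hNEB] at h2
    have : (N.E \ (X ∪ J)) ∩ X = ∅ := by
      rw [eq_empty_iff_forall_notMem]
      rintro x ⟨⟨-, hx⟩, hxX⟩
      exact hx (Or.inl hxX)
    rwa [this] at h2
  -- extend `X` to a basis `K` of `X ∪ J'`; it is a base of `N`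
  have hXind : N.Indep X := restrict_indep_iff.2 ⟨hXJ.subset subset_union_left,
    subset_union_left⟩
  have hXJ'E : X ∪ J' ⊆ N.E := union_subset subset_union_left
    (hJ'.subset.trans subset_union_right)
  obtain ⟨K, hK, hXK⟩ := hXind.subset_isBasis_of_subset (subset_union_left : X ⊆ X ∪ J') hXJ'E
  have hKbase : N.IsBase K := by
    refine hK.indep.isBase_of_ground_subset_closure ?_
    rw [hK.closure_eq_closure]
    refine union_subset ?_ ?_
    · exact (N.subset_closure (X ∪ J') hXJ'E).trans' subset_union_left
    · exact hNJ'.subset_closure.trans (N.closure_subset_closure subset_union_right)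
  -- `K ∩ B = J'`
  have hKB : N.IsBasis (K ∩ B) B := by
    refine (hKbase.inter_isBasis_iff_compl_inter_isBasis_dual hXBN).2 ?_
    rw [hNEB]
    have : (N.E \ K) ∩ X = ∅ := by
      rw [eq_empty_iff_forall_notMem]
      rintro x ⟨⟨-, hx⟩, hxX⟩
      exact hx (hXK hxX)
    rwa [this]
  have hKBJ' : K ∩ B = J' := by
    refine hKB.eq_of_subset_indep hNJ'.indep (fun x hx => ?_) hJ'.subset
    rcases hK.subset hx.1 with hxX | hxJ'
    · exact absurd hx.2 (disjoint_left.1 hXB hxX)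
    · exact hxJ'
  have hKeq : K = X ∪ J' := by
    refine subset_antisymm hK.subset (union_subset hXK ?_)
    rw [← hKBJ']
    exact inter_subset_left
  have := hK.indep
  rw [hKeq, hN, restrict_indep_iff] at this
  exact this.1

lemma relRank_eq_encard_diff {M : Matroid α} {A B I J : Set α} (hBA : B ⊆ A) (hA : A ⊆ M.E)
    (hJ : M.IsBasis J B) (hI : M.IsBasis I A) (hJI : J ⊆ I) :
    M.relRank A B = (I \ J).encard := by
  refine le_antisymm (sSup_le ?_) (le_sSup ⟨I, J, hI.indep, hJI, hI.subset,
    hJ.isMaxIndepIn, rfl⟩)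
  rintro n ⟨I₁, J₁, hI₁, hJ₁I₁, hI₁A, hmax, rfl⟩
  have hJ₁ : M.IsBasis J₁ B := hmax.basis (hBA.trans hA)
  set X₁ : Set α := I₁ \ J₁ with hX₁
  have hX₁B : Disjoint X₁ B := by
    rw [disjoint_left]
    rintro x ⟨hxI₁, hxJ₁⟩ hxB
    refine hxJ₁ ?_
    have : insert x J₁ = J₁ := hmax.2.2 (hI₁.subset (insert_subset hxI₁ hJ₁I₁))
      (subset_insert _ _) (insert_subset hxB hmax.2.1)
    rw [← this]; exact mem_insert _ _
  have hXJ : M.Indep (X₁ ∪ J) := by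
    refine union_indep_exchange hX₁B hJ₁ hJ ?_
    rwa [hX₁, diff_union_of_subset hJ₁I₁]
  -- extend `X₁ ∪ J` to a base `I₂` of `M ↾ A`
  have hXJA : M.Indep (X₁ ∪ J) ∧ X₁ ∪ J ⊆ A :=
    ⟨hXJ, union_subset ((diff_subset).trans hI₁A) (hJ.subset.trans hBA)⟩
  obtain ⟨I₂, hI₂, hXJI₂, hI₂sub⟩ :=
    (restrict_indep_iff.2 hXJA).exists_isBase_subset_union_isBase hI.isBase_restrict
  have hcomm : (I₂ \ I).encard = (I \ I₂).encard := hI₂.encard_diff_comm hI.isBase_restrict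
  have hJI₂ : J ⊆ I₂ := (subset_union_right).trans hXJI₂
  have e1 : I₂ \ J = (I₂ \ I) ∪ ((I₂ ∩ I) \ J) := by
    ext x
    simp only [mem_diff, mem_union, mem_inter_iff]
    constructor
    · rintro ⟨hx, hxJ⟩
      by_cases hxI : x ∈ I
      · exact Or.inr ⟨⟨hx, hxI⟩, hxJ⟩
      · exact Or.inl ⟨hx, hxI⟩
    · rintro (⟨hx, hxI⟩ | ⟨⟨hx, -⟩, hxJ⟩)
      · exact ⟨hx, fun hxJ => hxI (hJI hxJ)⟩
      · exact ⟨hx, hxJ⟩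
  have e2 : I \ J = (I \ I₂) ∪ ((I₂ ∩ I) \ J) := by
    ext x
    simp only [mem_diff, mem_union, mem_inter_iff]
    constructor
    · rintro ⟨hx, hxJ⟩
      by_cases hxI₂ : x ∈ I₂
      · exact Or.inr ⟨⟨hxI₂, hx⟩, hxJ⟩
      · exact Or.inl ⟨hx, hxI₂⟩
    · rintro (⟨hx, hxI₂⟩ | ⟨⟨-, hx⟩, hxJ⟩)
      · exact ⟨hx, fun hxJ => hxI₂ (hJI₂ hxJ)⟩
      · exact ⟨hx, hxJ⟩
  have hd1 : Disjoint (I₂ \ I) ((I₂ ∩ I) \ J) :=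
    disjoint_of_subset_right ((diff_subset).trans inter_subset_right) disjoint_sdiff_left
  have hd2 : Disjoint (I \ I₂) ((I₂ ∩ I) \ J) :=
    disjoint_of_subset_right ((diff_subset).trans inter_subset_left) disjoint_sdiff_left
  have key : (I₂ \ J).encard = (I \ J).encard := by
    rw [e1, e2, encard_union_eq hd1, encard_union_eq hd2, hcomm]
  rw [← key]
  refine encard_le_encard ?_
  refine subset_diff.2 ⟨(subset_union_left).trans hXJI₂, ?_⟩
  exact disjoint_of_subset_right hJ.subset hX₁B

lemma relRank_add_dual_relRank (M : Matroid α) {A B : Set α} (hBA : B ⊆ A) (hA : A ⊆ M.E) :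
    M.relRank A B + M✶.relRank (M.E \ B) (M.E \ A) = (A \ B).encard := by
  obtain ⟨J, hJ⟩ := M.exists_isBasis B (hBA.trans hA)
  obtain ⟨I, hI, hJI⟩ := hJ.indep.subset_isBasis_of_subset (hJ.subset.trans hBA) hA
  obtain ⟨B₀, hB₀, hIB₀⟩ := hI.exists_isBase
  have hJB₀ : J = B₀ ∩ B := by
    have : I ∩ B = J :=
      (hJ.eq_of_subset_indep (hI.indep.inter_right B)
        (subset_inter hJI hJ.subset) inter_subset_right).symm
    rw [← this, hIB₀, inter_assoc, inter_eq_self_of_subset_right hBA]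
  have h1 : M✶.IsBasis ((M.E \ B₀) ∩ (M.E \ A)) (M.E \ A) :=
    hB₀.compl_inter_isBasis_of_inter_isBasis (hIB₀ ▸ hI)
  have h2 : M✶.IsBasis ((M.E \ B₀) ∩ (M.E \ B)) (M.E \ B) :=
    hB₀.compl_inter_isBasis_of_inter_isBasis (hJB₀ ▸ hJ)
  have hsub : (M.E \ B₀) ∩ (M.E \ A) ⊆ (M.E \ B₀) ∩ (M.E \ B) :=
    inter_subset_inter_right _ (diff_subset_diff_right hBA)
  rw [relRank_eq_encard_diff hBA hA hJ hI hJI,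
    relRank_eq_encard_diff (diff_subset_diff_right hBA)
      (show M.E \ B ⊆ M✶.E from diff_subset) h1 h2 hsub]
  have e1 : I \ J = (A \ B) ∩ B₀ := by
    rw [hIB₀, hJB₀]
    ext x
    simp only [mem_diff, mem_inter_iff]
    tauto
  have e2 : ((M.E \ B₀) ∩ (M.E \ B)) \ ((M.E \ B₀) ∩ (M.E \ A)) = (A \ B) \ B₀ := by
    ext x
    simp only [mem_diff, mem_inter_iff]
    constructor
    · rintro ⟨⟨⟨hxE, hxB₀⟩, -, hxB⟩, h⟩
      refine ⟨⟨?_, hxB⟩, hxB₀⟩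
      by_contra hxA
      exact h ⟨⟨hxE, hxB₀⟩, hxE, hxA⟩
    · rintro ⟨⟨hxA, hxB⟩, hxB₀⟩
      exact ⟨⟨⟨hA hxA, hxB₀⟩, hA hxA, hxB⟩, fun h => h.2.2 hxA⟩
  rw [e1, e2, add_comm, encard_diff_add_encard_inter]

lemma indep_iff_relRank_ne_zero {M : Matroid α} {I : Set α} (hIE : I ⊆ M.E) :
    M.Indep I ↔ ∀ e ∈ I, M.relRank I (I \ {e}) ≠ 0 := by
  constructor
  · intro hI e he h0
    have h1 : (1 : ℕ∞) ≤ M.relRank I (I \ {e}) := by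
      refine le_sSup ⟨I, I \ {e}, hI, diff_subset, le_rfl,
        ⟨hI.subset diff_subset, le_rfl, fun J' hJ' h1 h2 => subset_antisymm h2 h1⟩, ?_⟩
      rw [diff_diff_cancel_left (singleton_subset_iff.2 he), encard_singleton]
    rw [h0] at h1
    simp at h1
  · intro h
    by_contra hdep
    obtain ⟨J₀, hJ₀⟩ := M.exists_isBasis I hIE
    have hne : J₀ ≠ I := fun heq => hdep (heq ▸ hJ₀.indep)
    obtain ⟨e, heI, heJ₀⟩ := exists_of_ssubset (ssubset_of_subset_of_ne hJ₀.subset hne)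
    refine h e heI ?_
    have hbot : M.relRank I (I \ {e}) = ⊥ := by
      rw [Matroid.relRank, sSup_eq_bot]
      rintro n ⟨I', J, hI', hJI', hI'I, hmax, rfl⟩
      rw [bot_eq_zero, encard_eq_zero, diff_eq_empty]
      by_contra hns
      obtain ⟨x, hxI', hxJ⟩ := not_subset.1 hns
      by_cases hxe : x = e
      · subst hxe
        have hJb : M.IsBasis J (I \ {x}) := hmax.basis ((diff_subset).trans hIE)
        have hJ₀b : M.IsBasis J₀ (I \ {x}) :=
          hJ₀.isBasis_subset (subset_diff_singleton hJ₀.subset heJ₀) diff_subset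
        have hXJ : M.Indep ({x} ∪ J) := by
          refine hI'.subset ?_
          rw [union_subset_iff, singleton_subset_iff]
          exact ⟨hxI', hJI'⟩
        have hXJ₀ : M.Indep ({x} ∪ J₀) :=
          union_indep_exchange (disjoint_sdiff_right.mono_left le_rfl) hJb hJ₀b hXJ
        have : insert x J₀ = J₀ := by
          have := hJ₀.eq_of_subset_indep (by rwa [← singleton_union])
            (subset_insert _ _) (insert_subset heI hJ₀.subset)
          exact this.symm
        exact heJ₀ (this ▸ mem_insert _ _)
      · have : insert x J = J := hmax.2.2 (hI'.subset (insert_subset hxI' hJI'))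
          (subset_insert _ _) (insert_subset ⟨hI'I hxI', hxe⟩ hmax.2.1)
        exact hxJ (this ▸ mem_insert _ _)
    rw [hbot]
    rfl

theorem stmt_8 (M M' : Matroid α) (hE : M'.E = M.E) :
    M' = M✶ ↔
      ∀ A B : Set α, B ⊆ A → A ⊆ M.E →
        M.relRank A B + M'.relRank (M.E \ B) (M.E \ A) = (A \ B).encard := by
  constructor
  · rintro rfl A B hBA hA
    exact relRank_add_dual_relRank M hBA hA
  · intro H
    have key : ∀ Y ⊆ M.E, ∀ e ∈ M.E \ Y,
        M'.relRank (insert e Y) Y = M✶.relRank (insert e Y) Y := by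
      intro Y hY e he
      have hBA : M.E \ insert e Y ⊆ M.E \ Y := diff_subset_diff_right (subset_insert _ _)
      have h1 := H (M.E \ Y) (M.E \ insert e Y) hBA diff_subset
      have h2 := relRank_add_dual_relRank M hBA (diff_subset : M.E \ Y ⊆ M.E)
      rw [diff_diff_cancel_left (insert_subset he.1 hY), diff_diff_cancel_left hY] at h1 h2
      have hd : (M.E \ Y) \ (M.E \ insert e Y) = {e} := by
        ext x
        simp only [mem_diff, mem_singleton_iff, not_and, not_not]
        constructor
        · rintro ⟨⟨hxE, hxY⟩, hx⟩
          rcases hx hxE with h | h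
          · exact h
          · exact absurd h hxY
        · rintro rfl
          exact ⟨⟨he.1, he.2⟩, fun _ => mem_insert _ _⟩
      rw [hd, encard_singleton] at h1 h2
      have hne : M.relRank (M.E \ Y) (M.E \ insert e Y) ≠ ⊤ := by
        intro htop
        rw [htop] at h1
        simp at h1
      exact WithTop.add_left_cancel hne (h1.trans h2.symm)
    refine ext_indep (by rw [hE, dual_ground]) fun ⦃I⦄ hIE => ?_
    rw [hE] at hIE
    rw [indep_iff_relRank_ne_zero (show I ⊆ M'.E by rwa [hE]),
      indep_iff_relRank_ne_zero (show I ⊆ M✶.E from hIE)]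
    refine forall₂_congr fun e he => ?_
    have hins : insert e (I \ {e}) = I := by
      rw [insert_diff_singleton, insert_eq_self.2 he]
    have := key (I \ {e}) ((diff_subset).trans hIE) e
      ⟨hIE he, fun h => h.2 rfl⟩
    rw [hins] at this
    rw [this]
end

section
/- Let E be a set and let r be a function assigning to each pair of sets B ⊆ A ⊆ E a value r(A|B) ∈ ℕ ∪ {∞}, satisfying: (R1) 0 ≤ r(A|B) ≤ |A \ B| for all B ⊆ A ⊆ E; (R2) r(A | A∩B) ≥ r(A∪B | B) for all A, B ⊆ E; (R3) r(A|C) = r(A|B) + r(B|C) for all C ⊆ B ⊆ A ⊆ E; (R4) if A = ⋃_{γ∈Γ} A_γ with B ⊆ A_γ ⊆ E for all γ and r(A_γ|B) = 0 for all γ ∈ Γ, then r(A|B) = 0; (R5) for all B ⊆ A ⊆ E there exists I ∈ 𝓘_r with I ⊆ A such that r(A|I) = 0 and r(B | B∩I) = 0, where 𝓘_r := { I ⊆ E : r(I | I−x) > 0 for all x ∈ I }. Then M = (E, 𝓘_r) is a matroid (in the Bruhn–Diestel–Kriesell–Wollan sense), and for all B ⊆ A ⊆ E, the relative rank r_M(A|B)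 of M equals r(A|B). -/
open Set Matroid

variable {α : Type*}

/-- `I` is `r`-independent (`I ∈ 𝓘_r`) with respect to the ground set `E`:
`I ⊆ E` and `r(I | I - x) > 0` for every `x ∈ I`. -/
def RIndep (E : Set α) (r : Set α → Set α → ℕ∞) (I : Set α) : Prop :=
  I ⊆ E ∧ ∀ x ∈ I, 0 < r I (I \ {x})

namespace StmtAux

variable {E : Set α} {r : Set α → Set α → ℕ∞}

lemma enat_eq_top {x : ℕ∞} (h : ∀ n : ℕ, (n : ℕ∞) ≤ x) : x = ⊤ := by
  cases x with
  | top => rfl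
  | coe n => exact absurd (h (n + 1)) (by exact_mod_cast Nat.not_succ_le_self n)

lemma r_self (hR1 : ∀ A B : Set α, B ⊆ A → A ⊆ E → r A B ≤ (A \ B).encard)
    {A : Set α} (hA : A ⊆ E) : r A A = 0 :=
  le_antisymm (by simpa using hR1 A A Subset.rfl hA) zero_le

lemma zero_mono (hR3 : ∀ A B C : Set α, C ⊆ B → B ⊆ A → A ⊆ E → r A C = r A B + r B C)
    {A A' B C : Set α} (hCB : C ⊆ B) (hBA : B ⊆ A) (hAA' : A ⊆ A') (hE : A' ⊆ E)
    (h : r A' C = 0) : r A B = 0 := by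
  have h1 := hR3 A' A C (hCB.trans hBA) hAA' hE
  rw [h1, add_eq_zero] at h
  have h2 := hR3 A B C hCB hBA (hAA'.trans hE)
  rw [h.2, eq_comm, add_eq_zero] at h2
  exact h2.1

lemma indep_subset (hR2 : ∀ A B : Set α, A ⊆ E → B ⊆ E → r (A ∪ B) B ≤ r A (A ∩ B))
    {I J : Set α} (hI : RIndep E r I) (hJI : J ⊆ I) : RIndep E r J := by
  refine ⟨hJI.trans hI.1, fun x hx => ?_⟩
  have h2 := hR2 J (I \ {x}) (hJI.trans hI.1) (diff_subset.trans hI.1)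
  have hu : J ∪ (I \ {x}) = I := by
    apply subset_antisymm (union_subset hJI diff_subset)
    intro y hy
    by_cases hyx : y = x
    · exact Or.inl (hyx ▸ hx)
    · exact Or.inr ⟨hy, hyx⟩
  have hi : J ∩ (I \ {x}) = J \ {x} := by
    ext y
    simp only [mem_inter_iff, mem_diff, mem_singleton_iff]
    exact ⟨fun h => ⟨h.1, h.2.2⟩, fun h => ⟨h.1, hJI h.1, h.2⟩⟩
  rw [hu, hi] at h2
  exact lt_of_lt_of_le (hI.2 x (hJI hx)) h2

lemma single (hR1 : ∀ A B : Set α, B ⊆ A → A ⊆ E → r A B ≤ (A \ B).encard)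
    (hR3 : ∀ A B C : Set α, C ⊆ B → B ⊆ A → A ⊆ E → r A C = r A B + r B C)
    {I : Set α} {x : α} (hI : RIndep E r I) (hx : x ∈ E) (hxI : x ∉ I)
    (h : 0 < r (insert x I) I) : RIndep E r (insert x I) := by
  have hI'E : insert x I ⊆ E := insert_subset hx hI.1
  refine ⟨hI'E, fun y hy => ?_⟩
  rcases eq_or_ne y x with rfl | hne
  · rw [insert_diff_self_of_notMem hxI]
    exact h
  · have hyI : y ∈ I := hy.resolve_left hne
    have hsub1 : I \ {y} ⊆ insert x I \ {y} := diff_subset_diff_left (subset_insert x I)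
    have c1 : r (insert x I) (I \ {y}) = r (insert x I) I + r I (I \ {y}) :=
      hR3 _ _ _ diff_subset (subset_insert x I) hI'E
    have c2 : r (insert x I) (I \ {y}) =
        r (insert x I) (insert x I \ {y}) + r (insert x I \ {y}) (I \ {y}) :=
      hR3 _ _ _ hsub1 diff_subset hI'E
    rw [pos_iff_ne_zero]
    intro h0
    have hb : r (insert x I \ {y}) (I \ {y}) ≤ 1 := by
      refine (hR1 _ _ hsub1 (diff_subset.trans hI'E)).trans ?_
      refine (encard_mono (show (insert x I \ {y}) \ (I \ {y}) ⊆ {x} by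
        intro z hz
        simp only [mem_diff, mem_insert_iff, mem_singleton_iff] at hz ⊢
        tauto)).trans ?_
      simp
    have hge : (2 : ℕ∞) ≤ r (insert x I) (I \ {y}) := by
      rw [c1]
      have g1 : (1 : ℕ∞) ≤ r (insert x I) I := ENat.one_le_iff_ne_zero.2 h.ne'
      have g2 : (1 : ℕ∞) ≤ r I (I \ {y}) := ENat.one_le_iff_ne_zero.2 (hI.2 y hyI).ne'
      calc (2 : ℕ∞) = 1 + 1 := by norm_num
        _ ≤ _ := add_le_add g1 g2
    rw [c2, h0, zero_add] at hge
    exact absurd (hge.trans hb) (by norm_num)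

lemma span_union (hR1 : ∀ A B : Set α, B ⊆ A → A ⊆ E → r A B ≤ (A \ B).encard)
    (hR4 : ∀ (B : Set α) (S : Set (Set α)), (∀ A' ∈ S, B ⊆ A' ∧ A' ⊆ E) →
      (∀ A' ∈ S, r A' B = 0) → r (⋃₀ S) B = 0)
    {I X : Set α} (hIX : I ⊆ X) (hXE : X ⊆ E)
    (h : ∀ x ∈ X, x ∉ I → r (insert x I) I = 0) : r X I = 0 := by
  set S : Set (Set α) := insert I ((fun x => insert x I) '' X) with hS
  have hUnion : ⋃₀ S = X := by
    apply subset_antisymm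
    · apply sUnion_subset
      rintro A' (rfl | ⟨x, hx, rfl⟩)
      · exact hIX
      · exact insert_subset hx hIX
    · intro y hy
      exact ⟨insert y I, Or.inr ⟨y, hy, rfl⟩, mem_insert y I⟩
  have h1 : ∀ A' ∈ S, I ⊆ A' ∧ A' ⊆ E := by
    rintro A' (rfl | ⟨x, hx, rfl⟩)
    · exact ⟨Subset.rfl, hIX.trans hXE⟩
    · exact ⟨subset_insert x I, insert_subset (hXE hx) (hIX.trans hXE)⟩
  have h2 : ∀ A' ∈ S, r A' I = 0 := by
    rintro A' (rfl | ⟨x, hx, rfl⟩)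
    · exact r_self hR1 (hIX.trans hXE)
    · show r (insert x I) I = 0
      by_cases hxI : x ∈ I
      · rw [insert_eq_self.2 hxI]
        exact r_self hR1 (hIX.trans hXE)
      · exact h x hx hxI
  rw [← hUnion]
  exact hR4 I S h1 h2

lemma maximal_of_span (hR3 : ∀ A B C : Set α, C ⊆ B → B ⊆ A → A ⊆ E → r A C = r A B + r B C)
    {I X : Set α} (hIX : I ⊆ X) (hXE : X ⊆ E) (h0 : r X I = 0) :
    ∀ J, RIndep E r J → I ⊆ J → J ⊆ X → J = I := by
  intro J hJ hIJ hJX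
  by_contra hne
  obtain ⟨x, hxJ, hxI⟩ := not_subset.1 (fun hs => hne (subset_antisymm hs hIJ))
  have h1 : r J I = 0 := zero_mono hR3 Subset.rfl hIJ hJX hXE h0
  have h2 := hR3 J (J \ {x}) I (subset_diff_singleton hIJ hxI) diff_subset hJ.1
  rw [h1, eq_comm, add_eq_zero] at h2
  exact (hJ.2 x hxJ).ne' h2.1

lemma span_of_maximal (hR1 : ∀ A B : Set α, B ⊆ A → A ⊆ E → r A B ≤ (A \ B).encard)
    (hR3 : ∀ A B C : Set α, C ⊆ B → B ⊆ A → A ⊆ E → r A C = r A B + r B C)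
    (hR4 : ∀ (B : Set α) (S : Set (Set α)), (∀ A' ∈ S, B ⊆ A' ∧ A' ⊆ E) →
      (∀ A' ∈ S, r A' B = 0) → r (⋃₀ S) B = 0)
    {I X : Set α} (hI : RIndep E r I) (hIX : I ⊆ X) (hXE : X ⊆ E)
    (hmax : ∀ J, RIndep E r J → I ⊆ J → J ⊆ X → J = I) : r X I = 0 := by
  refine span_union hR1 hR4 hIX hXE (fun x hx hxI => ?_)
  by_contra h0
  have hpos : 0 < r (insert x I) I := pos_iff_ne_zero.2 h0
  have := hmax (insert x I) (single hR1 hR3 hI (hXE hx) hxI hpos)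
    (subset_insert x I) (insert_subset hx hIX)
  exact hxI (this ▸ mem_insert x I)

lemma r_indep_finite (hR1 : ∀ A B : Set α, B ⊆ A → A ⊆ E → r A B ≤ (A \ B).encard)
    (hR2 : ∀ A B : Set α, A ⊆ E → B ⊆ E → r (A ∪ B) B ≤ r A (A ∩ B))
    (hR3 : ∀ A B C : Set α, C ⊆ B → B ⊆ A → A ⊆ E → r A C = r A B + r B C)
    (n : ℕ) : ∀ I J : Set α, RIndep E r I → J ⊆ I → (I \ J).encard = n → r I J = n := by
  induction n with
  | zero =>
    intro I J hI hJI h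
    rw [Nat.cast_zero, encard_eq_zero, diff_eq_empty] at h
    rw [subset_antisymm h hJI]
    exact_mod_cast r_self hR1 (hJI.trans hI.1)
  | succ n ih =>
    intro I J hI hJI h
    obtain ⟨x, hx⟩ : (I \ J).Nonempty := by
      rw [← encard_ne_zero, h]
      exact_mod_cast Nat.succ_ne_zero n
    have hJx : J ⊆ I \ {x} := subset_diff_singleton hJI hx.2
    have e1 : ((I \ {x}) \ J).encard = n := by
      have : (I \ {x}) \ J = (I \ J) \ {x} := by
        ext y; simp only [mem_diff, mem_singleton_iff]; tauto
      rw [this]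
      have h2 := encard_diff_singleton_add_one hx
      rw [h] at h2
      have hcast : ((n : ℕ∞) + 1) = ((n + 1 : ℕ) : ℕ∞) := by push_cast; ring
      rw [← hcast] at h2
      exact WithTop.add_right_cancel (by simp : (1 : ℕ∞) ≠ ⊤) h2
    have hI' : RIndep E r (I \ {x}) := indep_subset hR2 hI diff_subset
    have hsplit := hR3 I (I \ {x}) J hJx diff_subset hI.1
    have h1 : r I (I \ {x}) = 1 := by
      refine le_antisymm ?_ (ENat.one_le_iff_ne_zero.2 (hI.2 x hx.1).ne')
      refine (hR1 _ _ diff_subset hI.1).trans ?_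
      refine (encard_mono (show I \ (I \ {x}) ⊆ {x} by
        intro z hz
        simp only [mem_diff, mem_singleton_iff, not_and, not_not] at hz
        exact hz.2 hz.1)).trans (by simp)
    rw [hsplit, h1, ih _ _ hI' hJx e1]
    push_cast; ring

lemma r_indep (hR1 : ∀ A B : Set α, B ⊆ A → A ⊆ E → r A B ≤ (A \ B).encard)
    (hR2 : ∀ A B : Set α, A ⊆ E → B ⊆ E → r (A ∪ B) B ≤ r A (A ∩ B))
    (hR3 : ∀ A B C : Set α, C ⊆ B → B ⊆ A → A ⊆ E → r A C = r A B + r B C)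
    {I J : Set α} (hI : RIndep E r I) (hJI : J ⊆ I) : r I J = (I \ J).encard := by
  cases h : (I \ J).encard with
  | coe n => exact r_indep_finite hR1 hR2 hR3 n I J hI hJI h
  | top =>
    refine le_antisymm ((hR1 _ _ hJI hI.1).trans_eq h) ?_
    rw [top_le_iff]
    refine enat_eq_top (fun n => ?_)
    obtain ⟨F, hF, hFn⟩ := exists_subset_encard_eq
      (show (n : ℕ∞) ≤ (I \ J).encard by rw [h]; exact le_top)
    have hFI : F ⊆ I := hF.trans diff_subset
    have hJIF : J ⊆ I \ F := fun y hy => ⟨hJI hy, fun hyF => (hF hyF).2 hy⟩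
    have hval : r I (I \ F) = n := by
      refine r_indep_finite hR1 hR2 hR3 n I (I \ F) hI diff_subset ?_
      rw [diff_diff_cancel_left hFI, hFn]
    have := hR3 I (I \ F) J hJIF diff_subset hI.1
    rw [this, hval]
    exact le_self_add

end StmtAux

open StmtAux
theorem stmt_9 (E : Set α) (r : Set α → Set α → ℕ∞)
    (hR1 : ∀ A B : Set α, B ⊆ A → A ⊆ E → r A B ≤ (A \ B).encard)
    (hR2 : ∀ A B : Set α, A ⊆ E → B ⊆ E → r (A ∪ B) B ≤ r A (A ∩ B))
    (hR3 : ∀ A B C : Set α, C ⊆ B → B ⊆ A → A ⊆ E → r A C = r A B + r B C)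
    (hR4 : ∀ (B : Set α) (S : Set (Set α)), (∀ A' ∈ S, B ⊆ A' ∧ A' ⊆ E) →
      (∀ A' ∈ S, r A' B = 0) → r (⋃₀ S) B = 0)
    (hR5 : ∀ A B : Set α, B ⊆ A → A ⊆ E →
      ∃ I : Set α, RIndep E r I ∧ I ⊆ A ∧ r A I = 0 ∧ r B (B ∩ I) = 0) :
    ∃ M : Matroid α, M.E = E ∧ (∀ I : Set α, M.Indep I ↔ RIndep E r I) ∧
      ∀ A B : Set α, B ⊆ A → A ⊆ E → M.relRank A B = r A B := by
  have indep_maximal : ∀ X, X ⊆ E → Matroid.ExistsMaximalSubsetProperty (RIndep E r) X := by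
    intro X hXE I hI hIX
    obtain ⟨J, hJind, hJX, hXJ0, hII0⟩ := hR5 X I hIX hXE
    have hIJ : I ⊆ J := by
      intro x hx
      by_contra hxJ
      have hsub : I ∩ J ⊆ I \ {x} := fun y hy =>
        ⟨hy.1, fun hyx => hxJ (hyx ▸ hy.2)⟩
      have h2 := hR3 I (I \ {x}) (I ∩ J) hsub diff_subset hI.1
      rw [hII0, eq_comm, add_eq_zero] at h2
      exact (hI.2 x hx).ne' h2.1
    refine ⟨J, hIJ, ⟨⟨hJind, hJX⟩, fun K hK hJK => ?_⟩⟩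
    exact (maximal_of_span hR3 hJX hXE hXJ0 K hK.1 hJK hK.2).le
  set M' : IndepMatroid α := {
    E := E
    Indep := RIndep E r
    indep_empty := ⟨empty_subset E, fun x hx => absurd hx (notMem_empty x)⟩
    indep_subset := fun I J hJ hIJ => indep_subset hR2 hJ hIJ
    indep_aug := by
      intro I B hI hInmax hBmax
      by_contra hcon
      push_neg at hcon
      have hBE : B ⊆ E := hBmax.1.1
      have hIBE : I ∪ B ⊆ E := union_subset hI.1 hBE
      have h1 : r (I ∪ B) I = 0 := by
        refine span_union hR1 hR4 subset_union_left hIBE (fun x hx hxI => ?_)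
        have hxB : x ∈ B := hx.resolve_left hxI
        by_contra h0
        exact hcon x ⟨hxB, hxI⟩
          (single hR1 hR3 hI (hBE hxB) hxI (pos_iff_ne_zero.2 h0))
      have h2 : r E B = 0 := by
        refine span_of_maximal hR1 hR3 hR4 hBmax.1 hBE Subset.rfl
          (fun J hJ hBJ hJE => ?_)
        exact subset_antisymm (hBmax.2 hJ hBJ) hBJ
      have e1 := hR3 E (I ∪ B) I subset_union_left hIBE Subset.rfl
      have e2 := hR3 E (I ∪ B) B subset_union_right hIBE Subset.rfl
      rw [h2, eq_comm, add_eq_zero] at e2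
      rw [e2.1, h1, add_zero] at e1
      exact hInmax ⟨hI, fun J hJ hIJ =>
        (maximal_of_span hR3 hI.1 Subset.rfl e1 J hJ hIJ hJ.1).le⟩
    indep_maximal := indep_maximal
    subset_ground := fun I hI => hI.1 }
  refine ⟨M'.matroid, rfl, fun I => by simp [M', IndepMatroid.matroid_Indep], ?_⟩
  intro A B hBA hAE
  have hBE : B ⊆ E := hBA.trans hAE
  have hindep_iff : ∀ I : Set α, (M'.matroid).Indep I ↔ RIndep E r I := fun I => by
    simp [M', IndepMatroid.matroid_Indep]
  apply le_antisymm
  · apply sSup_le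
    rintro n ⟨I, J, hIind, hJI, hIA, hJmax, rfl⟩
    rw [hindep_iff] at hIind
    have hJind : RIndep E r J := (hindep_iff J).1 hJmax.1
    have hJB : J ⊆ B := hJmax.2.1
    have hBJ0 : r B J = 0 := by
      refine span_of_maximal hR1 hR3 hR4 hJind hJB hBE (fun K hK hJK hKB => ?_)
      exact hJmax.2.2 ((hindep_iff K).2 hK) hJK hKB
    rw [← r_indep hR1 hR2 hR3 hIind hJI]
    calc r I J ≤ r A I + r I J := le_add_self
      _ = r A J := (hR3 A I J hJI hIA hAE).symm
      _ = r A B + r B J := hR3 A B J hJB hBA hAE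
      _ = r A B := by rw [hBJ0, add_zero]
  · obtain ⟨I, hIind, hIA, hAI0, hBI0⟩ := hR5 A B hBA hAE
    set J := B ∩ I with hJ
    have hJI : J ⊆ I := inter_subset_right
    have hJind : RIndep E r J := indep_subset hR2 hIind hJI
    have hJB : J ⊆ B := inter_subset_left
    refine le_sSup ⟨I, J, (hindep_iff I).2 hIind, hJI, hIA, ?_, ?_⟩
    · refine ⟨(hindep_iff J).2 hJind, hJB, fun J' hJ' hJJ' hJ'B => ?_⟩
      exact maximal_of_span hR3 hJB hBE hBI0 J' ((hindep_iff J').1 hJ') hJJ' hJ'B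
    · rw [← r_indep hR1 hR2 hR3 hIind hJI]
      have e1 := hR3 A I J hJI hIA hAE
      rw [hAI0, zero_add] at e1
      have e2 := hR3 A B J hJB hBA hAE
      rw [hBI0, add_zero] at e2
      rw [← e1, ← e2]
end

section
/- Let E be a set and let r assign to each pair B ⊆ A ⊆ E a value r(A|B) ∈ ℕ ∪ {∞} satisfying (R1) r(A|B) ≤ |A \ B| for all B ⊆ A ⊆ E, and (R3) r(A|C) = r(A|B) + r(B|C) for all C ⊆ B ⊆ A ⊆ E. If I ∈ 𝓘_r and x ∈ E \ I, then I + x ∈ 𝓘_r if and only if r(I + x | I) > 0. -/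
open Set

variable {α : Type*}

theorem stmt_11 (E : Set α) (r : Set α → Set α → ℕ∞)
    (hR1 : ∀ A B : Set α, B ⊆ A → A ⊆ E → r A B ≤ (A \ B).encard)
    (hR3 : ∀ A B C : Set α, C ⊆ B → B ⊆ A → A ⊆ E → r A C = r A B + r B C)
    (I : Set α) (x : α) (hI : RIndep E r I) (hx : x ∈ E \ I) :
    RIndep E r (I ∪ {x}) ↔ 0 < r (I ∪ {x}) I := by
  obtain ⟨hIE, hind⟩ := hI
  obtain ⟨hxE, hxI⟩ := hx
  have hsub : I ∪ {x} ⊆ E := union_subset hIE (singleton_subset_iff.2 hxE)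
  have hdiffx : (I ∪ {x}) \ {x} = I := by
    ext y; simp only [mem_diff, mem_union, mem_singleton_iff]
    constructor
    · rintro ⟨h1 | h1, h2⟩ <;> [exact h1; exact absurd h1 h2]
    · intro hy; exact ⟨Or.inl hy, fun h => hxI (h ▸ hy)⟩
  constructor
  · intro ⟨_, h⟩
    have := h x (Or.inr rfl)
    rwa [hdiffx] at this
  · intro hpos
    refine ⟨hsub, fun y hy => ?_⟩
    rcases hy with hy | hy
    · -- y ∈ I
      have h1 : r (I ∪ {x}) (I \ {y}) = r (I ∪ {x}) I + r I (I \ {y}) :=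
        hR3 _ _ _ (diff_subset) (subset_union_left) hsub
      have h2 : r (I ∪ {x}) (I \ {y}) =
          r (I ∪ {x}) ((I ∪ {x}) \ {y}) + r ((I ∪ {x}) \ {y}) (I \ {y}) := by
        refine hR3 _ _ _ ?_ diff_subset hsub
        exact diff_subset_diff_left subset_union_left
      have hb : r ((I ∪ {x}) \ {y}) (I \ {y}) ≤ 1 := by
        have := hR1 ((I ∪ {x}) \ {y}) (I \ {y})
          (diff_subset_diff_left subset_union_left) (diff_subset.trans hsub)
        refine this.trans ?_
        have hss : ((I ∪ {x}) \ {y}) \ (I \ {y}) ⊆ {x} := by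
          rintro z ⟨⟨hz | hz, hzy⟩, hz2⟩
          · exact absurd ⟨hz, hzy⟩ hz2
          · exact hz
        calc (((I ∪ {x}) \ {y}) \ (I \ {y})).encard ≤ ({x} : Set α).encard :=
              encard_mono hss
          _ = 1 := encard_singleton x
      have hy' : 0 < r I (I \ {y}) := hind y hy
      by_contra hcon
      push_neg at hcon
      have ha : r (I ∪ {x}) ((I ∪ {x}) \ {y}) = 0 := le_antisymm hcon zero_le
      have hle : r (I ∪ {x}) (I \ {y}) ≤ 1 := by
        rw [h2, ha, zero_add]; exact hb
      have hge : (2 : ℕ∞) ≤ r (I ∪ {x}) (I \ {y}) := by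
        rw [h1]
        have hp1 : (1 : ℕ∞) ≤ r (I ∪ {x}) I := ENat.one_le_iff_ne_zero.2 hpos.ne'
        have hp2 : (1 : ℕ∞) ≤ r I (I \ {y}) := ENat.one_le_iff_ne_zero.2 hy'.ne'
        calc (2 : ℕ∞) = 1 + 1 := by norm_num
          _ ≤ r (I ∪ {x}) I + r I (I \ {y}) := add_le_add hp1 hp2
      have : (2 : ℕ∞) ≤ 1 := hge.trans hle
      norm_num at this
    · -- y = x
      rw [mem_singleton_iff] at hy
      subst hy
      rwa [hdiffx]
end

section
/- Let E be a set and let r assign to each pair B ⊆ A ⊆ E a value r(A|B) ∈ ℕ ∪ {∞} satisfying (R1) r(A|B) ≤ |A \ B| for all B ⊆ A ⊆ E; (R3) r(A|C) = r(A|B) + r(B|C) for all C ⊆ B ⊆ A ⊆ E; and (R4) if A = ⋃_{γ∈Γ} A_γ with B ⊆ A_γ ⊆ E for all γ and r(A_γ|B) = 0 for all γ, then r(A|B) = 0. If I ∈ 𝓘_r and I ⊆ F ⊆ E, then I is a maximal r-independent subset of F if and only if r(F|I) = 0. -/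
open Set

variable {α : Type*}

theorem stmt_12 (E : Set α) (r : Set α → Set α → ℕ∞)
    (hR1 : ∀ A B : Set α, B ⊆ A → A ⊆ E → r A B ≤ (A \ B).encard)
    (hR3 : ∀ A B C : Set α, C ⊆ B → B ⊆ A → A ⊆ E → r A C = r A B + r B C)
    (hR4 : ∀ (B : Set α) (S : Set (Set α)), (∀ A' ∈ S, B ⊆ A' ∧ A' ⊆ E) →
      (∀ A' ∈ S, r A' B = 0) → r (⋃₀ S) B = 0)
    (I F : Set α) (hI : RIndep E r I) (hIF : I ⊆ F) (hFE : F ⊆ E) :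
    (RIndep E r I ∧ I ⊆ F ∧
        ∀ I' : Set α, RIndep E r I' → I ⊆ I' → I' ⊆ F → I' = I) ↔
      r F I = 0 := by
  obtain ⟨hIE, hIind⟩ := hI
  constructor
  · rintro ⟨-, -, hmax⟩
    have hzero : ∀ x ∈ F, r (insert x I) I = 0 := by
      intro x hxF
      by_cases hxI : x ∈ I
      · rw [Set.insert_eq_self.mpr hxI]
        have h := hR1 I I (le_refl _) (hIF.trans hFE)
        simpa using h
      · by_contra h0
        have hpos : 0 < r (insert x I) I := pos_iff_ne_zero.mpr h0
        have hsub : insert x I ⊆ E := insert_subset (hFE hxF) hIE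
        have hind : RIndep E r (insert x I) := by
          refine ⟨hsub, ?_⟩
          intro y hy
          rcases eq_or_ne y x with rfl | hyx
          · rwa [show insert y I \ {y} = I by
              rw [insert_diff_self_of_notMem hxI]]
          · have hyI : y ∈ I := hy.resolve_left hyx
            set A := insert x I with hA
            set B := A \ {y} with hB
            set C := I \ {y} with hC
            have hCB : C ⊆ B := diff_subset_diff_left (subset_insert x I)
            have hAC1 : r A C = r A B + r B C := hR3 A B C hCB diff_subset hsub
            have hAC2 : r A C = r A I + r I C :=
              hR3 A I C diff_subset (subset_insert x I) hsub
            have hposC : 0 < r I C := hIind y hyI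
            have hBC : r B C ≤ 1 := by
              have hBCset : B \ C = {x} := by
                ext z
                simp only [hB, hC, hA, mem_diff, mem_insert_iff, mem_singleton_iff]
                constructor
                · rintro ⟨⟨rfl | hzI, hzy⟩, hz2⟩
                  · rfl
                  · exact absurd ⟨hzI, hzy⟩ hz2
                · rintro rfl
                  exact ⟨⟨Or.inl rfl, fun h => hyx h.symm⟩, fun h => hxI h.1⟩
              have := hR1 B C hCB (diff_subset.trans hsub)
              rw [hBCset] at this
              simpa using this
            by_contra h0'
            have hAB0 : r A B = 0 := by
              simpa [pos_iff_ne_zero] using h0'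
            have h2le : (2 : ℕ∞) ≤ r A I + r I C := by
              have h1 : (1 : ℕ∞) ≤ r A I := ENat.one_le_iff_ne_zero.mpr hpos.ne'
              have h2 : (1 : ℕ∞) ≤ r I C := ENat.one_le_iff_ne_zero.mpr hposC.ne'
              calc (2 : ℕ∞) = 1 + 1 := by norm_num
                _ ≤ r A I + r I C := add_le_add h1 h2
            rw [← hAC2, hAC1, hAB0, zero_add] at h2le
            have : (2 : ℕ∞) ≤ 1 := h2le.trans hBC
            norm_num at this
        have heq := hmax (insert x I) hind (subset_insert x I) (insert_subset hxF hIF)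
        exact hxI (heq ▸ mem_insert x I)
    have hU : ⋃₀ {A | ∃ x ∈ F, A = insert x I} = F := by
      ext y
      simp only [mem_sUnion, mem_setOf_eq]
      constructor
      · rintro ⟨A, ⟨x, hx, rfl⟩, hyA⟩
        rcases hyA with rfl | hyI
        · exact hx
        · exact hIF hyI
      · intro hy
        exact ⟨insert y I, ⟨y, hy, rfl⟩, mem_insert y I⟩
    rw [← hU]
    apply hR4
    · rintro A ⟨x, hx, rfl⟩
      exact ⟨subset_insert x I, insert_subset (hFE hx) hIE⟩
    · rintro A ⟨x, hx, rfl⟩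
      exact hzero x hx
  · intro hr
    refine ⟨⟨hIE, hIind⟩, hIF, ?_⟩
    rintro I' ⟨hI'E, hI'ind⟩ hII' hI'F
    refine Subset.antisymm ?_ hII'
    intro x hx
    by_contra hxI
    have h1 : r F I = r F I' + r I' I := hR3 F I' I hII' hI'F hFE
    rw [hr] at h1
    have h2 : r I' I = 0 := (add_eq_zero.mp h1.symm).2
    have hIsub : I ⊆ I' \ {x} := fun y hy => ⟨hII' hy, fun h => hxI (h ▸ hy)⟩
    have h3 : r I' I = r I' (I' \ {x}) + r (I' \ {x}) I :=
      hR3 I' (I' \ {x}) I hIsub diff_subset hI'E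
    rw [h2] at h3
    have h4 : r I' (I' \ {x}) = 0 := (add_eq_zero.mp h3.symm).1
    have := hI'ind x hx
    rw [h4] at this
    exact lt_irrefl _ this
end

section
/- Let E be a set and let r assign to each pair B ⊆ A ⊆ E a value r(A|B) ∈ ℕ ∪ {∞} satisfying (R1) r(A|B) ≤ |A \ B|; (R3) r(A|C) = r(A|B) + r(B|C) for all C ⊆ B ⊆ A ⊆ E; and (R4) if A = ⋃_{γ∈Γ} A_γ with B ⊆ A_γ ⊆ E for all γ and r(A_γ|B) = 0 for all γ, then r(A|B) = 0. Then 𝓘_r satisfies the exchange axiom (I3): if I ∈ 𝓘_r is not maximal in 𝓘_r and I' is maximal in 𝓘_r, then I + x ∈ 𝓘_r for some x ∈ I' \ I. -/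
open Set

variable {α : Type*}

theorem stmt_13 (E : Set α) (r : Set α → Set α → ℕ∞)
    (hR1 : ∀ A B : Set α, B ⊆ A → A ⊆ E → r A B ≤ (A \ B).encard)
    (hR3 : ∀ A B C : Set α, C ⊆ B → B ⊆ A → A ⊆ E → r A C = r A B + r B C)
    (hR4 : ∀ (B : Set α) (S : Set (Set α)), (∀ A' ∈ S, B ⊆ A' ∧ A' ⊆ E) →
      (∀ A' ∈ S, r A' B = 0) → r (⋃₀ S) B = 0)
    (I I' : Set α) (hI : RIndep E r I) (hInotmax : ¬ Maximal (RIndep E r) I)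
    (hI'max : Maximal (RIndep E r) I') :
    ∃ x ∈ I' \ I, RIndep E r (I ∪ {x}) := by
  have hself : ∀ A : Set α, A ⊆ E → r A A = 0 := by
    intro A hA
    have h := hR1 A A subset_rfl hA
    simpa using h
  -- Claim 1: adding an element of positive relative rank preserves independence
  have claim1 : ∀ J x, RIndep E r J → x ∈ E → x ∉ J → 0 < r (J ∪ {x}) J →
      RIndep E r (J ∪ {x}) := by
    rintro J x ⟨hJE, hJind⟩ hxE hxJ hpos
    have hJxE : J ∪ {x} ⊆ E := union_subset hJE (singleton_subset_iff.mpr hxE)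
    refine ⟨hJxE, ?_⟩
    intro y hy
    rcases eq_or_ne y x with rfl | hyx
    · have he : (J ∪ {y}) \ {y} = J := by
        rw [union_diff_distrib, diff_singleton_eq_self hxJ]
        simp
      rwa [he]
    · have hyJ : y ∈ J := by
        rcases hy with h | h
        · exact h
        · exact absurd h (by simpa using hyx)
      have hCB : J \ {y} ⊆ (J ∪ {x}) \ {y} := diff_subset_diff_left subset_union_left
      have h1 := hR3 (J ∪ {x}) ((J ∪ {x}) \ {y}) (J \ {y}) hCB diff_subset hJxE
      have h2 := hR3 (J ∪ {x}) J (J \ {y}) diff_subset subset_union_left hJxE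
      have hBeq : (J ∪ {x}) \ {y} = (J \ {y}) ∪ {x} := by
        rw [union_diff_distrib,
          show ({x} : Set α) \ {y} = {x} from diff_singleton_eq_self (by simpa using hyx)]
      have hb : r ((J ∪ {x}) \ {y}) (J \ {y}) ≤ 1 := by
        refine le_trans (hR1 _ _ hCB (diff_subset.trans hJxE)) ?_
        have hsub : ((J ∪ {x}) \ {y}) \ (J \ {y}) ⊆ {x} := by
          rw [hBeq, union_diff_left]
          exact diff_subset
        exact le_trans (encard_mono hsub) (by simp)
      have ha1 : 1 ≤ r (J ∪ {x}) J := ENat.one_le_iff_ne_zero.mpr hpos.ne'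
      have ha2 : 1 ≤ r J (J \ {y}) := ENat.one_le_iff_ne_zero.mpr (hJind y hyJ).ne'
      by_contra hcontra
      push_neg at hcontra
      have hz : r (J ∪ {x}) ((J ∪ {x}) \ {y}) = 0 := le_antisymm hcontra zero_le
      rw [hz, zero_add] at h1
      have habs : (2 : ℕ∞) ≤ 1 := by
        calc (2 : ℕ∞) = 1 + 1 := by norm_num
        _ ≤ r (J ∪ {x}) J + r J (J \ {y}) := add_le_add ha1 ha2
        _ = r (J ∪ {x}) (J \ {y}) := h2.symm
        _ = r ((J ∪ {x}) \ {y}) (J \ {y}) := h1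
        _ ≤ 1 := hb
      norm_num at habs
  -- Claim 3: r(E|J)=0 implies J maximal
  have claim3 : ∀ J, RIndep E r J → r E J = 0 → Maximal (RIndep E r) J := by
    rintro J hJ hJ0
    refine ⟨hJ, ?_⟩
    rintro K ⟨hKE, hKind⟩ hJK x hxK
    by_contra hxJ
    have hJKx : J ⊆ K \ {x} := subset_diff_singleton hJK hxJ
    have e1 := hR3 E (K \ {x}) J hJKx (diff_subset.trans hKE) subset_rfl
    rw [hJ0] at e1
    have e2 : r E (K \ {x}) = 0 := by
      have h := add_eq_zero.mp e1.symm
      exact h.1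
    have e3 := hR3 E K (K \ {x}) diff_subset hKE subset_rfl
    rw [e2] at e3
    have h := add_eq_zero.mp e3.symm
    exact (hKind x hxK).ne' h.2
  -- Aux: covering by single-element extensions of zero relative rank
  have hauxU : ∀ J A : Set α, J ⊆ A → A ⊆ E → (∀ x ∈ A, r (J ∪ {x}) J = 0) →
      r A J = 0 := by
    intro J A hJA hAE hx
    have hJE : J ⊆ E := hJA.trans hAE
    set S : Set (Set α) := insert J ((fun x => J ∪ {x}) '' A) with hS
    have hUS : ⋃₀ S = A := by
      apply subset_antisymm
      · rw [sUnion_subset_iff]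
        intro t ht
        rw [hS, mem_insert_iff, mem_image] at ht
        rcases ht with rfl | ⟨x, hxA, rfl⟩
        · exact hJA
        · exact union_subset hJA (singleton_subset_iff.mpr hxA)
      · intro y hy
        exact ⟨J ∪ {y}, Or.inr ⟨y, hy, rfl⟩, Or.inr rfl⟩
    have hmem : ∀ A' ∈ S, J ⊆ A' ∧ A' ⊆ E := by
      intro t ht
      rw [hS, mem_insert_iff, mem_image] at ht
      rcases ht with rfl | ⟨x, hxA, rfl⟩
      · exact ⟨subset_rfl, hJE⟩
      · exact ⟨subset_union_left, union_subset hJE (singleton_subset_iff.mpr (hAE hxA))⟩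
    have hzero : ∀ A' ∈ S, r A' J = 0 := by
      intro t ht
      rw [hS, mem_insert_iff, mem_image] at ht
      rcases ht with heq | ⟨x, hxA, rfl⟩
      · rw [heq]; exact hself J hJE
      · exact hx x hxA
    have h := hR4 J S hmem hzero
    rwa [hUS] at h
  have hI'E : I' ⊆ E := hI'max.1.1
  have hIE : I ⊆ E := hI.1
  -- r(E|I') = 0
  have hEI' : r E I' = 0 := by
    apply hauxU I' E hI'E subset_rfl
    intro x hxE
    rcases em (x ∈ I') with hxI' | hxI'
    · rw [union_eq_self_of_subset_right (singleton_subset_iff.mpr hxI')]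
      exact hself I' hI'E
    · by_contra hne
      have hind := claim1 I' x hI'max.1 hxE hxI' (pos_iff_ne_zero.mpr hne)
      have hsub : I' ∪ {x} ⊆ I' := hI'max.2 hind subset_union_left
      exact hxI' (hsub (Or.inr rfl))
  have hEI : r E I ≠ 0 := fun h0 => hInotmax (claim3 I hI h0)
  by_contra hcon
  push_neg at hcon
  have hzero : ∀ x ∈ I', r (I ∪ {x}) I = 0 := by
    intro x hxI'
    rcases em (x ∈ I) with hxI | hxI
    · rw [union_eq_self_of_subset_right (singleton_subset_iff.mpr hxI)]
      exact hself I hIE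
    · by_contra hne
      have hind := claim1 I x hI (hI'E hxI') hxI (pos_iff_ne_zero.mpr hne)
      exact hcon x ⟨hxI', hxI⟩ hind
  have hUII' : r (I ∪ I') I = 0 := by
    apply hauxU I (I ∪ I') subset_union_left (union_subset hIE hI'E)
    intro x hx
    rcases hx with hxI | hxI'
    · rw [union_eq_self_of_subset_right (singleton_subset_iff.mpr hxI)]
      exact hself I hIE
    · exact hzero x hxI'
  have e1 := hR3 E (I ∪ I') I subset_union_left (union_subset hIE hI'E) subset_rfl
  have e2 := hR3 E (I ∪ I') I' subset_union_right (union_subset hIE hI'E) subset_rfl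
  rw [hEI'] at e2
  have hEU : r E (I ∪ I') = 0 := (add_eq_zero.mp e2.symm).1
  exact hEI (by rw [e1, hEU, hUII', add_zero])
end

section
/- Let E be a set and let r assign to each pair B ⊆ A ⊆ E a value r(A|B) ∈ ℕ ∪ {∞} satisfying (R1) r(A|B) ≤ |A \ B|; (R3) r(A|C) = r(A|B) + r(B|C) for all C ⊆ B ⊆ A ⊆ E; (R4) if A = ⋃_{γ∈Γ} A_γ with B ⊆ A_γ ⊆ E for all γ and r(A_γ|B) = 0 for all γ, then r(A|B) = 0; and (R5) for all B ⊆ A ⊆ E there exists I ∈ 𝓘_r with I ⊆ A such that r(A|I) = 0 and r(B | B∩I) = 0. Then 𝓘_r satisfies the maximality axiom (IM): for every I ∈ 𝓘_r and every X with I ⊆ X ⊆ E, the set {I' ∈ 𝓘_r : I ⊆ I' ⊆ X} has an inclusionwise maximal element. -/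
open Set

variable {α : Type*}

theorem stmt_14 (E : Set α) (r : Set α → Set α → ℕ∞)
    (hR1 : ∀ A B : Set α, B ⊆ A → A ⊆ E → r A B ≤ (A \ B).encard)
    (hR3 : ∀ A B C : Set α, C ⊆ B → B ⊆ A → A ⊆ E → r A C = r A B + r B C)
    (hR4 : ∀ (B : Set α) (S : Set (Set α)), (∀ A' ∈ S, B ⊆ A' ∧ A' ⊆ E) →
      (∀ A' ∈ S, r A' B = 0) → r (⋃₀ S) B = 0)
    (hR5 : ∀ A B : Set α, B ⊆ A → A ⊆ E →
      ∃ I : Set α, RIndep E r I ∧ I ⊆ A ∧ r A I = 0 ∧ r B (B ∩ I) = 0) :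
    ∀ I X : Set α, RIndep E r I → I ⊆ X → X ⊆ E →
      ∃ J : Set α, RIndep E r J ∧ I ⊆ J ∧ J ⊆ X ∧
        ∀ J' : Set α, RIndep E r J' → I ⊆ J' → J' ⊆ X → J ⊆ J' → J' = J := by
  intro I X hI hIX hXE
  obtain ⟨J, hJ, hJX, hXJ0, hIJ0⟩ := hR5 X I hIX hXE
  have hIsubJ : I ⊆ J := by
    by_contra h
    obtain ⟨x, hxI, hxJ⟩ := not_subset.1 h
    have h1 : I ∩ J ⊆ I \ {x} := fun y hy =>
      ⟨hy.1, by rintro rfl; exact hxJ hy.2⟩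
    have h3 := hR3 I (I \ {x}) (I ∩ J) h1 diff_subset hI.1
    rw [hIJ0] at h3
    have h4 : r I (I \ {x}) = 0 := by
      have := (add_eq_zero.mp h3.symm).1
      exact this
    exact absurd h4 (hI.2 x hxI).ne'
  refine ⟨J, hJ, hIsubJ, hJX, ?_⟩
  intro J' hJ' hIJ' hJ'X hJJ'
  refine subset_antisymm ?_ hJJ'
  by_contra h
  obtain ⟨x, hxJ', hxJ⟩ := not_subset.1 h
  have hJsub : J ⊆ J' \ {x} := fun y hy =>
    ⟨hJJ' hy, by rintro rfl; exact hxJ hy⟩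
  have h3 := hR3 X J' J hJJ' hJ'X hXE
  rw [hXJ0] at h3
  have hJ'J : r J' J = 0 := (add_eq_zero.mp h3.symm).2
  have h4 := hR3 J' (J' \ {x}) J hJsub diff_subset hJ'.1
  rw [hJ'J] at h4
  have h5 : r J' (J' \ {x}) = 0 := (add_eq_zero.mp h4.symm).1
  exact absurd h5 (hJ'.2 x hxJ').ne'
end

section
/- Let E be a set and let r assign to each pair B ⊆ A ⊆ E a value r(A|B) ∈ ℕ ∪ {∞} satisfying (R1), (R3), (R4) as above. If I ∈ 𝓘_r is a finite set, then r(I | ∅) = |I|. -/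
open Set

variable {α : Type*}

theorem stmt_15 (E : Set α) (r : Set α → Set α → ℕ∞)
    (hR1 : ∀ A B : Set α, B ⊆ A → A ⊆ E → r A B ≤ (A \ B).encard)
    (hR3 : ∀ A B C : Set α, C ⊆ B → B ⊆ A → A ⊆ E → r A C = r A B + r B C)
    (hR4 : ∀ (B : Set α) (S : Set (Set α)), (∀ A' ∈ S, B ⊆ A' ∧ A' ⊆ E) →
      (∀ A' ∈ S, r A' B = 0) → r (⋃₀ S) B = 0)
    (I : Set α) (hI : RIndep E r I) (hfin : I.Finite) :
    r I ∅ = I.encard := by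
  classical
  -- r(I | I\{x}) = 1 for x ∈ I, I independent
  have step : ∀ (J : Set α) (x : α), x ∈ J → RIndep E r J → r J (J \ {x}) = 1 := by
    intro J x hx hJ
    have hle : r J (J \ {x}) ≤ (J \ (J \ {x})).encard := hR1 _ _ diff_subset hJ.1
    have hdd : J \ (J \ {x}) = {x} := by
      ext y; simp only [mem_diff, mem_singleton_iff]; constructor
      · rintro ⟨hy, h⟩; by_contra hne; exact h ⟨hy, hne⟩
      · rintro rfl; exact ⟨hx, fun h => h.2 rfl⟩
    rw [hdd, encard_singleton] at hle
    exact le_antisymm hle (ENat.one_le_iff_ne_zero.mpr (hJ.2 x hx).ne')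
  -- independence is preserved by deleting a point
  have del : ∀ (J : Set α) (x : α), x ∈ J → RIndep E r J → RIndep E r (J \ {x}) := by
    intro J x hx hJ
    refine ⟨diff_subset.trans hJ.1, fun y hy => ?_⟩
    have hyJ : y ∈ J := hy.1
    have hne : x ≠ y := fun h => hy.2 (h ▸ rfl)
    have key : (J \ {x}) \ {y} = J \ {x, y} := by
      rw [diff_diff, singleton_union]
    rw [key]
    by_contra h
    push_neg at h
    have h0 : r (J \ {x}) (J \ {x, y}) = 0 := le_antisymm h zero_le
    have hsub1 : J \ {x, y} ⊆ J \ {x} := diff_subset_diff_right (by simp)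
    have hsub2 : J \ {x, y} ⊆ J \ {y} := diff_subset_diff_right (by simp)
    have h1 : r J (J \ {x, y}) = 1 := by
      rw [hR3 J (J \ {x}) (J \ {x, y}) hsub1 diff_subset hJ.1, step J x hx hJ, h0, add_zero]
    have h2 : r J (J \ {x, y}) = r J (J \ {y}) + r (J \ {y}) (J \ {x, y}) :=
      hR3 J (J \ {y}) (J \ {x, y}) hsub2 diff_subset hJ.1
    have hy1 : r J (J \ {y}) = 1 := step J y hyJ hJ
    have h0' : r (J \ {y}) (J \ {x, y}) = 0 := by
      rw [h2, hy1] at h1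
      by_contra hne0
      have : (1 : ℕ∞) ≤ r (J \ {y}) (J \ {x, y}) := ENat.one_le_iff_ne_zero.mpr hne0
      have : (1 : ℕ∞) + 1 ≤ 1 + r (J \ {y}) (J \ {x, y}) := add_le_add (le_refl 1) this
      rw [h1] at this
      exact absurd this (by norm_num)
    -- apply R4 to S = {J\{x}, J\{y}}
    have hU : ⋃₀ ({J \ {x}, J \ {y}} : Set (Set α)) = J := by
      simp only [sUnion_insert, sUnion_singleton]
      ext z; simp only [mem_union, mem_diff, mem_singleton_iff]
      constructor
      · rintro (⟨h, _⟩ | ⟨h, _⟩) <;> exact h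
      · intro hz
        rcases eq_or_ne z x with rfl | hzx
        · exact Or.inr ⟨hz, hne⟩
        · exact Or.inl ⟨hz, hzx⟩
    have hzero : r J (J \ {x, y}) = 0 := by
      have happ := hR4 (J \ {x, y}) {J \ {x}, J \ {y}}
        (by rintro A' (rfl | rfl)
            · exact ⟨hsub1, diff_subset.trans hJ.1⟩
            · exact ⟨hsub2, diff_subset.trans hJ.1⟩)
        (by rintro A' (rfl | rfl)
            · exact h0
            · exact h0')
      rwa [hU] at happ
    rw [hzero] at h1; exact one_ne_zero h1.symm
  -- main induction on cardinality
  have main : ∀ n : ℕ, ∀ J : Set α, J.Finite → J.ncard = n → RIndep E r J → r J ∅ = J.encard := by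
    intro n
    induction n with
    | zero =>
      intro J hf h0 hJ
      have hJe : J = ∅ := (Set.ncard_eq_zero hf).mp h0
      subst hJe
      have := hR1 ∅ ∅ (Subset.refl _) (empty_subset E)
      simpa using le_antisymm (by simpa using this) zero_le
    | succ n ih =>
      intro J hf hcard hJ
      obtain ⟨x, hx⟩ : J.Nonempty := Set.nonempty_of_ncard_ne_zero (by omega)
      have hJ' := del J x hx hJ
      have hcard' : (J \ {x}).ncard = n := by
        rw [Set.ncard_diff_singleton_of_mem hx, hcard]; omega
      have hrec := ih (J \ {x}) hf.diff hcard' hJ'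
      have hchain := hR3 J (J \ {x}) ∅ (empty_subset _) diff_subset hJ.1
      rw [hchain, step J x hx hJ, hrec, Set.encard_diff_singleton_of_mem hx]
      have hxe : J.encard ≠ ⊤ := hf.encard_lt_top.ne
      have h1 : 1 ≤ J.encard := Set.one_le_encard_iff_nonempty.mpr ⟨x, hx⟩
      rw [add_comm]
      exact tsub_add_cancel_of_le h1
  exact main I.ncard I hfin rfl hI
end
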